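/- arXiv:1911.12542 — 2 statements merged into one kernel-verified Lean document; each statement's English description precedes it below -/
import Mathlib

section
/- For odd n ≥ 5 and any 1 ≤ i₁ ≤ ⋯ ≤ i_k ≤ (n−3)/2, the graph H₁(i₁,…,i_k) = C_n + v_{i₁}v_{n−i₁} + ⋯ + v_{i_k}v_{n−i_k} satisfies α(H₁(i₁,…,i_k)) = α(C_n). -/
open Matrix SimpleGraph

/-- The algebraic connectivity of `G`: the infimum of the Rayleigh quotients of the
Laplacian matrix over nonzero vectors orthogonal to the all-ones vector.  For a graph on
at least two vertices this is the second smallest eigenvalue of the Laplacian. -/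
noncomputable def algCon {V : Type*} [Fintype V] [DecidableEq V] (G : SimpleGraph V) : ℝ :=
  letI := Classical.decRel G.Adj
  sInf { r : ℝ | ∃ x : V → ℝ, x ≠ 0 ∧ (∑ v, x v) = 0 ∧
    r = (x ⬝ᵥ (G.lapMatrix ℝ *ᵥ x)) / (∑ v, (x v) ^ 2) }

/-- A graph is 2-connected if it has at least two vertices and every pair of distinct
vertices is joined by (at least) two internally disjoint paths. -/
def TwoConnected {V : Type*} (G : SimpleGraph V) : Prop :=
  (∃ u v : V, u ≠ v) ∧ ∀ u v : V, u ≠ v → ∃ p q : G.Walk u v, p.IsPath ∧ q.IsPath ∧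
    ∀ w, w ∈ p.support → w ∈ q.support → w = u ∨ w = v

/-- `G` is a θ-graph: it consists of three pairwise internally disjoint paths with common
endpoints `a ≠ b`, which together exhaust all vertices and all edges of `G`. -/
def IsThetaGraph {V : Type*} (G : SimpleGraph V) : Prop :=
  ∃ (a b : V) (p₁ p₂ p₃ : G.Walk a b), a ≠ b ∧ p₁.IsPath ∧ p₂.IsPath ∧ p₃.IsPath ∧
    (∀ w, w ∈ p₁.support → w ∈ p₂.support → w = a ∨ w = b) ∧
    (∀ w, w ∈ p₁.support → w ∈ p₃.support → w = a ∨ w = b) ∧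
    (∀ w, w ∈ p₂.support → w ∈ p₃.support → w = a ∨ w = b) ∧
    (∀ w : V, w ∈ p₁.support ∨ w ∈ p₂.support ∨ w ∈ p₃.support) ∧
    (∀ e, e ∈ G.edgeSet ↔ e ∈ p₁.edges ∨ e ∈ p₂.edges ∨ e ∈ p₃.edges)

/-- The cycle `C_n` on vertices `v₀, …, v_{n-1}` together with the chords
`v_{(f j).1} v_{(f j).2}` for `j = 1, …, k`. -/
def cyclePlusChords (n k : ℕ) (f : Fin k → ℕ × ℕ) : SimpleGraph (Fin n) :=
  SimpleGraph.cycleGraph n ⊔ SimpleGraph.fromEdgeSet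
    {e | ∃ (j : Fin k) (a b : Fin n), (a : ℕ) = (f j).1 ∧ (b : ℕ) = (f j).2 ∧ e = s(a, b)}

/-- `H₁(i₁,…,i_k) = C_n + v_{i₁}v_{n−i₁} + ⋯ + v_{i_k}v_{n−i_k}` (`n` odd); this is also
the graph `H₂(i₁,…,i_k)` when `n` is even. -/
def H12 (n k : ℕ) (i : Fin k → ℕ) : SimpleGraph (Fin n) :=
  cyclePlusChords n k (fun j => (i j, n - i j))

/-- `H₃(i₁,…,i_k) = C_n + v_{i₁}v_{n−i₁−1} + ⋯ + v_{i_k}v_{n−i_k−1}` (`n` even). -/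
def H3 (n k : ℕ) (i : Fin k → ℕ) : SimpleGraph (Fin n) :=
  cyclePlusChords n k (fun j => (i j, n - i j - 1))

noncomputable def th (n : ℕ) : ℝ := 2 * Real.pi / n
noncomputable def om (n : ℕ) : ℂ := Complex.exp ((th n : ℝ) * Complex.I)

lemma om_zpow (n : ℕ) (d : ℤ) : om n ^ d = Complex.exp (((d * th n : ℝ)) * Complex.I) := by
  rw [om, ← Complex.exp_int_mul]
  congr 1
  push_cast
  ring

lemma om_zpow_re (n : ℕ) (d : ℤ) : (om n ^ d).re = Real.cos (d * th n) := by
  rw [om_zpow]; exact Complex.exp_ofReal_mul_I_re _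

lemma om_ne_zero (n : ℕ) : om n ≠ 0 := Complex.exp_ne_zero _

lemma om_pow_nat (hn : n ≠ 0) : om n ^ ((n : ℕ) : ℤ) = 1 := by
  rw [om_zpow]
  have h : ((n:ℝ)) * th n = 2 * Real.pi := by
    rw [th]; field_simp [Nat.cast_ne_zero.mpr hn]
  rw [show (((n:ℤ) * th n : ℝ)) = 2 * Real.pi by push_cast; rw [← h]]
  rw [show (((2 * Real.pi : ℝ)) : ℂ) * Complex.I = 2 * Real.pi * Complex.I by push_cast; ring]
  exact Complex.exp_two_pi_mul_I

lemma om_zpow_im (n : ℕ) (d : ℤ) : (om n ^ d).im = Real.sin (d * th n) := by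
  rw [om_zpow]; exact Complex.exp_ofReal_mul_I_im _

lemma om_zpow_eq_one_iff {n : ℕ} (hn : n ≠ 0) (d : ℤ) : om n ^ d = 1 ↔ (n:ℤ) ∣ d := by
  constructor
  · intro h
    rw [om_zpow, Complex.exp_eq_one_iff] at h
    obtain ⟨k, hk⟩ := h
    have him : ((d : ℝ) * th n) = k * (2 * Real.pi) := by
      have := congrArg Complex.im hk
      simpa using this
    have hn' : (n : ℝ) ≠ 0 := Nat.cast_ne_zero.mpr hn
    have h2 : (2 * Real.pi) ≠ 0 := by positivity
    have : (d : ℝ) = (n : ℝ) * k := by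
      rw [th] at him
      field_simp at him
      apply mul_right_cancel₀ h2
      ring_nf
      ring_nf at him
      rw [him]; ring
    exact ⟨k, by exact_mod_cast this⟩
  · rintro ⟨e, rfl⟩
    rw [_root_.zpow_mul, om_pow_nat hn, _root_.one_zpow]

lemma om_congr {n : ℕ} (hn : n ≠ 0) {a b : ℤ} (h : a % (n:ℤ) = b % (n:ℤ)) :
    om n ^ a = om n ^ b := by
  have hd : (n:ℤ) ∣ a - b := Int.ModEq.dvd (Int.ModEq.symm h)
  have h1 : om n ^ (a - b) = 1 := (om_zpow_eq_one_iff hn _).mpr hd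
  have h2 : om n ^ a = om n ^ b * om n ^ (a - b) := by
    rw [← zpow_add₀ (om_ne_zero n)]
    congr 1
    ring
  rw [h2, h1, mul_one]

lemma om_conj (n : ℕ) (d : ℤ) : (starRingEnd ℂ) (om n ^ d) = om n ^ (-d) := by
  rw [om_zpow, om_zpow, ← Complex.exp_conj]
  congr 1
  simp [Complex.ext_iff]

lemma geom_fin {n : ℕ} (hn : n ≠ 0) {d : ℤ} (hd : ¬ (n:ℤ) ∣ d) :
    ∑ m : Fin n, (om n ^ d) ^ (m : ℕ) = 0 := by
  rw [Fin.sum_univ_eq_sum_range]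
  have h1 : om n ^ d ≠ 1 := fun h => hd ((om_zpow_eq_one_iff hn d).mp h)
  rw [geom_sum_eq h1]
  have h3 : (om n ^ d) ^ n = 1 := by
    rw [← zpow_natCast, ← _root_.zpow_mul, mul_comm, _root_.zpow_mul, om_pow_nat hn, _root_.one_zpow]
  rw [h3]
  simp
noncomputable def four (n : ℕ) (y : Fin n → ℝ) (m : Fin n) : ℂ :=
  ∑ j : Fin n, (y j : ℂ) * om n ^ (((j : ℕ) : ℤ) * ((m : ℕ) : ℤ))

lemma four_conj (n : ℕ) (y : Fin n → ℝ) (m : Fin n) :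
    (starRingEnd ℂ) (four n y m) = ∑ k : Fin n, (y k : ℂ) * om n ^ (-(((k:ℕ):ℤ) * ((m:ℕ):ℤ))) := by
  rw [four, map_sum]
  refine Finset.sum_congr rfl fun k _ => ?_
  rw [_root_.map_mul, om_conj, Complex.conj_ofReal]

lemma geom_ite {n : ℕ} (hn : n ≠ 0) (j k : Fin n) :
    ∑ m : Fin n, (om n ^ (((j:ℕ):ℤ) - ((k:ℕ):ℤ))) ^ (m : ℕ) = if j = k then (n:ℂ) else 0 := by
  by_cases h : j = k
  · subst h
    simp
  · rw [if_neg h]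
    refine geom_fin hn ?_
    rintro ⟨e, he⟩
    have hj : ((j:ℕ):ℤ) < n := by exact_mod_cast j.isLt
    have hk' : ((k:ℕ):ℤ) < n := by exact_mod_cast k.isLt
    have hj0 : 0 ≤ ((j:ℕ):ℤ) := Int.natCast_nonneg _
    have hk0 : 0 ≤ ((k:ℕ):ℤ) := Int.natCast_nonneg _
    have hne : ((j:ℕ):ℤ) ≠ ((k:ℕ):ℤ) := by
      simpa [Fin.ext_iff] using h
    have hn0 : (0:ℤ) < n := by exact_mod_cast Nat.pos_of_ne_zero hn
    have he1 : -(n:ℤ) < n * e := by omega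
    have he2 : (n:ℤ) * e < n := by omega
    have hlt : e < 1 := by
      by_contra hc
      push_neg at hc
      nlinarith
    have hgt : -1 < e := by
      by_contra hc
      push_neg at hc
      nlinarith
    have he0 : e = 0 := by omega
    rw [he0, mul_zero] at he
    omega

lemma parseval {n : ℕ} (hn : n ≠ 0) (y : Fin n → ℝ) :
    ∑ m : Fin n, Complex.normSq (four n y m) = n * ∑ j : Fin n, (y j) ^ 2 := by
  have key : ∑ m : Fin n, ((Complex.normSq (four n y m) : ℂ)) =
      (n : ℂ) * ∑ j : Fin n, ((y j : ℂ)) ^ 2 := by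
    have e1 : ∀ m : Fin n, ((Complex.normSq (four n y m) : ℂ)) =
        ∑ j : Fin n, ∑ k : Fin n,
          ((y j : ℂ) * (y k : ℂ)) * (om n ^ (((j:ℕ):ℤ) - ((k:ℕ):ℤ))) ^ (m : ℕ) := by
      intro m
      rw [← Complex.mul_conj, four_conj]
      rw [four, Finset.sum_mul_sum]
      refine Finset.sum_congr rfl fun j _ => Finset.sum_congr rfl fun k _ => ?_
      rw [← zpow_natCast (om n ^ (((j:ℕ):ℤ) - ((k:ℕ):ℤ))), ← _root_.zpow_mul]
      have h2 : om n ^ ((((j:ℕ):ℤ) - ((k:ℕ):ℤ)) * ((m:ℕ):ℤ)) =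
          om n ^ (((j:ℕ):ℤ) * ((m:ℕ):ℤ)) * om n ^ (-(((k:ℕ):ℤ) * ((m:ℕ):ℤ))) := by
        rw [← zpow_add₀ (om_ne_zero n)]
        congr 1
        ring
      rw [h2]
      ring
    rw [Finset.sum_congr rfl fun m _ => e1 m, Finset.sum_comm]
    have : ∀ j : Fin n, ∑ m : Fin n, ∑ k : Fin n,
        ((y j : ℂ) * (y k : ℂ)) * (om n ^ (((j:ℕ):ℤ) - ((k:ℕ):ℤ))) ^ (m : ℕ)
        = (n : ℂ) * (y j : ℂ) ^ 2 := by
      intro j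
      rw [Finset.sum_comm]
      have : ∀ k : Fin n, ∑ m : Fin n,
          ((y j : ℂ) * (y k : ℂ)) * (om n ^ (((j:ℕ):ℤ) - ((k:ℕ):ℤ))) ^ (m : ℕ)
          = ((y j : ℂ) * (y k : ℂ)) * (if j = k then (n:ℂ) else 0) := by
        intro k
        rw [← Finset.mul_sum, geom_ite hn]
      rw [Finset.sum_congr rfl fun k _ => this k]
      simp [Finset.sum_ite_eq, mul_ite]
      ring
    rw [Finset.sum_congr rfl fun j _ => this j, ← Finset.mul_sum]
  have := key
  push_cast at this
  exact_mod_cast this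
lemma natmod_helper (n : ℕ) (a : ℕ) : (((a % n : ℕ)) : ℤ) % (n:ℤ) = (a : ℤ) % n := by
  push_cast
  exact Int.emod_emod_of_dvd _ dvd_rfl

lemma four_zero {n : ℕ} [NeZero n] (y : Fin n → ℝ) :
    four n y 0 = ((∑ j, y j : ℝ) : ℂ) := by
  rw [four]
  push_cast
  refine Finset.sum_congr rfl fun j _ => ?_
  simp

lemma four_sub (n : ℕ) (y z : Fin n → ℝ) (m : Fin n) :
    four n (fun j => y j - z j) m = four n y m - four n z m := by
  simp only [four, ← Finset.sum_sub_distrib]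
  refine Finset.sum_congr rfl fun j _ => ?_
  push_cast
  ring

lemma four_shift {n : ℕ} (hn : 5 ≤ n) (y : Fin n → ℝ) (m : Fin n) :
    haveI : NeZero n := ⟨by omega⟩
    four n (fun j => y (j + 1)) m = om n ^ (-((m:ℕ):ℤ)) * four n y m := by
  haveI : NeZero n := ⟨by omega⟩
  have hn0 : n ≠ 0 := by omega
  rw [four, four, Finset.mul_sum]
  refine Fintype.sum_equiv (Equiv.addRight (1 : Fin n)) _ _ fun j => ?_
  simp only [Equiv.coe_addRight]
  have hval : (((j + 1 : Fin n) : ℕ) : ℤ) % n = (((j:ℕ):ℤ) + 1) % n := by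
    rw [Fin.val_add]
    have h1 : ((1 : Fin n) : ℕ) = 1 := by
      rw [Fin.val_one']
      exact Nat.mod_eq_of_lt (by omega)
    rw [h1, natmod_helper]
    push_cast
    ring_nf
  have hcong : om n ^ ((((j + 1 : Fin n) : ℕ) : ℤ) * ((m:ℕ):ℤ)) =
      om n ^ ((((j:ℕ):ℤ) + 1) * ((m:ℕ):ℤ)) := by
    refine om_congr hn0 ?_
    have : ((((j + 1 : Fin n) : ℕ) : ℤ) * ((m:ℕ):ℤ)) % n = ((((j:ℕ):ℤ) + 1) * ((m:ℕ):ℤ)) % n := by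
      exact Int.ModEq.mul_right _ hval
    exact this
  have hsplit : om n ^ ((((j:ℕ):ℤ) + 1) * ((m:ℕ):ℤ)) =
      om n ^ (((j:ℕ):ℤ) * ((m:ℕ):ℤ)) * om n ^ (((m:ℕ):ℤ)) := by
    rw [← zpow_add₀ (om_ne_zero n)]
    congr 1
    ring
  have hone : om n ^ (-((m:ℕ):ℤ)) * om n ^ (((m:ℕ):ℤ)) = 1 := by
    rw [← zpow_add₀ (om_ne_zero n)]
    simp
  rw [hcong, hsplit]
  calc ((y (j + 1) : ℝ) : ℂ) * om n ^ (((j:ℕ):ℤ) * ((m:ℕ):ℤ))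
      = (om n ^ (-((m:ℕ):ℤ)) * om n ^ (((m:ℕ):ℤ))) * (((y (j + 1) : ℝ) : ℂ) * om n ^ (((j:ℕ):ℤ) * ((m:ℕ):ℤ))) := by
        rw [hone, one_mul]
    _ = om n ^ (-((m:ℕ):ℤ)) * (((y (j + 1) : ℝ) : ℂ) * (om n ^ (((j:ℕ):ℤ) * ((m:ℕ):ℤ)) * om n ^ (((m:ℕ):ℤ)))) := by
        ring
lemma norm_factor (n : ℕ) (m : ℕ) :
    Complex.normSq (om n ^ (-((m:ℕ):ℤ)) - 1) = 2 - 2 * Real.cos (m * th n) := by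
  have hre : (om n ^ (-((m:ℕ):ℤ))).re = Real.cos (m * th n) := by
    rw [om_zpow_re]
    push_cast
    rw [neg_mul, Real.cos_neg]
  have him : (om n ^ (-((m:ℕ):ℤ))).im = - Real.sin (m * th n) := by
    rw [om_zpow_im]
    push_cast
    rw [neg_mul, Real.sin_neg]
  rw [Complex.normSq_apply, Complex.sub_re, Complex.sub_im, hre, him]
  have := Real.sin_sq_add_cos_sq (m * th n)
  simp only [Complex.one_re, Complex.one_im]
  nlinarith

lemma cos_bnd {n : ℕ} (hn : 5 ≤ n) {m : ℕ} (h1 : 1 ≤ m) (h2 : m < n) :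
    Real.cos (m * th n) ≤ Real.cos (th n) := by
  have hpi := Real.pi_pos
  have hn0 : (0:ℝ) < n := by positivity
  have hth : 0 < th n := by rw [th]; positivity
  have hthpi : th n ≤ Real.pi := by
    rw [th, div_le_iff₀ hn0]
    have h5n : (5:ℝ) ≤ n := by exact_mod_cast hn
    nlinarith
  have hm1 : th n ≤ m * th n := by
    have hm' : (1:ℝ) ≤ m := by exact_mod_cast h1
    nlinarith
  have hmn : (m:ℝ) * th n ≤ 2 * Real.pi - th n := by
    have hm : (m:ℝ) ≤ n - 1 := by
      have : (m:ℝ) + 1 ≤ n := by exact_mod_cast h2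
      linarith
    have : ((m:ℝ) + 1) * th n ≤ n * th n := by
      apply mul_le_mul_of_nonneg_right _ hth.le
      linarith
    have hnth : (n:ℝ) * th n = 2 * Real.pi := by
      rw [th]; field_simp
    nlinarith
  by_cases hc : (m:ℝ) * th n ≤ Real.pi
  · exact Real.cos_le_cos_of_nonneg_of_le_pi hth.le hc hm1
  · push_neg at hc
    have : Real.cos ((m:ℝ) * th n) = Real.cos (2 * Real.pi - (m:ℝ) * th n) := by
      rw [Real.cos_two_pi_sub]
    rw [this]
    apply Real.cos_le_cos_of_nonneg_of_le_pi hth.le (by linarith) (by linarith)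

lemma wirtinger {n : ℕ} (hn : 5 ≤ n) (y : Fin n → ℝ) (hy : ∑ j, y j = 0) :
    haveI : NeZero n := ⟨by omega⟩
    (2 - 2 * Real.cos (th n)) * ∑ j : Fin n, (y j)^2 ≤ ∑ j : Fin n, (y (j+1) - y j)^2 := by
  haveI : NeZero n := ⟨by omega⟩
  have hn0 : n ≠ 0 := by omega
  set z := fun j : Fin n => y (j+1) - y j with hz
  have h1 : ∀ m, four n z m = (om n ^ (-((m:ℕ):ℤ)) - 1) * four n y m := by
    intro m
    have : four n z m = four n (fun j => y (j+1)) m - four n y m := four_sub n _ y m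
    rw [this, four_shift hn]
    ring
  have h2 : (n:ℝ) * ∑ j, (z j)^2 = ∑ m : Fin n, (2 - 2 * Real.cos ((m:ℕ) * th n)) * Complex.normSq (four n y m) := by
    rw [← parseval hn0 z]
    refine Finset.sum_congr rfl fun m _ => ?_
    rw [h1, Complex.normSq_mul, norm_factor]
  have h3 : Complex.normSq (four n y 0) = 0 := by
    rw [four_zero, hy]
    simp
  have h4 : ∀ m : Fin n, (2 - 2 * Real.cos (th n)) * Complex.normSq (four n y m)
      ≤ (2 - 2 * Real.cos ((m:ℕ) * th n)) * Complex.normSq (four n y m) := by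
    intro m
    by_cases hm : m = 0
    · subst hm; rw [h3]; simp
    · apply mul_le_mul_of_nonneg_right _ (Complex.normSq_nonneg _)
      have hm1 : 1 ≤ (m:ℕ) := by
        rcases Nat.eq_zero_or_pos (m:ℕ) with h | h
        · exact absurd (Fin.ext (by simp [h, Fin.val_zero])) hm
        · exact h
      have := cos_bnd hn hm1 m.isLt
      linarith
  have h5 : (2 - 2 * Real.cos (th n)) * ((n:ℝ) * ∑ j, (y j)^2)
      ≤ (n:ℝ) * ∑ j, (z j)^2 := by
    rw [h2, ← parseval hn0 y, Finset.mul_sum]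
    exact Finset.sum_le_sum fun m _ => h4 m
  have hnpos : (0:ℝ) < n := by positivity
  calc (2 - 2 * Real.cos (th n)) * ∑ j, (y j)^2
      = ((2 - 2 * Real.cos (th n)) * ((n:ℝ) * ∑ j, (y j)^2)) / n := by field_simp
    _ ≤ ((n:ℝ) * ∑ j, (z j)^2) / n := by gcongr
    _ = ∑ j, (z j)^2 := by field_simp
noncomputable def xv (n : ℕ) (j : Fin n) : ℝ := (om n ^ ((j:ℕ):ℤ)).re

lemma not_dvd_of_lt {n : ℕ} (hn : 5 ≤ n) {b : ℤ} (hb1 : 0 < b) (hb2 : b < 5) : ¬ (n:ℤ) ∣ b := by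
  intro h
  have := Int.le_of_dvd hb1 h
  omega

lemma sum_cos_ab {n : ℕ} (hn : 5 ≤ n) (a b : ℕ) (hb : ¬ (n:ℤ) ∣ (b:ℤ)) :
    ∑ j : Fin n, Real.cos (((a:ℝ) + (b:ℝ) * ((j:ℕ):ℝ)) * th n) = 0 := by
  have hterm : ∀ j : Fin n, Real.cos (((a:ℝ) + (b:ℝ) * ((j:ℕ):ℝ)) * th n)
      = (om n ^ ((a:ℤ)) * (om n ^ ((b:ℤ))) ^ ((j:ℕ))).re := by
    intro j
    rw [← zpow_natCast (om n ^ ((b:ℤ))), ← _root_.zpow_mul, ← zpow_add₀ (om_ne_zero n), om_zpow_re]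
    congr 1
    push_cast
    ring
  rw [Finset.sum_congr rfl fun j _ => hterm j, ← Complex.re_sum, ← Finset.mul_sum,
    geom_fin (by omega : n ≠ 0) hb, mul_zero, Complex.zero_re]

lemma xv_eq {n : ℕ} (j : Fin n) : xv n j = Real.cos (((j:ℕ):ℝ) * th n) := by
  rw [xv, om_zpow_re]
  norm_num

lemma xv_succ {n : ℕ} (hn : 5 ≤ n) (j : Fin n) :
    haveI : NeZero n := ⟨by omega⟩
    xv n (j + 1) = Real.cos ((((j:ℕ):ℝ) + 1) * th n) := by
  haveI : NeZero n := ⟨by omega⟩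
  rw [xv]
  have h1 : ((1 : Fin n) : ℕ) = 1 := by
    rw [Fin.val_one']
    exact Nat.mod_eq_of_lt (by omega)
  have hval : (((j + 1 : Fin n) : ℕ) : ℤ) % n = (((j:ℕ):ℤ) + 1) % n := by
    rw [Fin.val_add, h1, natmod_helper]
    push_cast
    ring_nf
  rw [om_congr (by omega : n ≠ 0) hval, om_zpow_re]
  congr 1
  push_cast
  ring

lemma sum_xv {n : ℕ} (hn : 5 ≤ n) : ∑ j : Fin n, xv n j = 0 := by
  have := sum_cos_ab hn 0 1 (not_dvd_of_lt hn (by norm_num) (by norm_num))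
  rw [Finset.sum_congr rfl fun j (_ : j ∈ Finset.univ) => xv_eq j]
  rw [← this]
  refine Finset.sum_congr rfl fun j _ => ?_
  norm_num

lemma sum_xv_sq {n : ℕ} (hn : 5 ≤ n) : ∑ j : Fin n, (xv n j) ^ 2 = n / 2 := by
  have h2 := sum_cos_ab hn 0 2 (not_dvd_of_lt hn (by norm_num) (by norm_num))
  have hterm : ∀ j : Fin n, (xv n j) ^ 2
      = 1/2 + (1/2) * Real.cos (((0:ℝ) + (2:ℝ) * ((j:ℕ):ℝ)) * th n) := by
    intro j
    rw [xv_eq]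
    have := Real.cos_sq (((j:ℕ):ℝ) * th n)
    rw [show (2:ℝ) * (((j:ℕ):ℝ) * th n) = ((0:ℝ) + (2:ℝ) * ((j:ℕ):ℝ)) * th n by ring] at this
    linarith
  push_cast at h2
  rw [Finset.sum_congr rfl fun j _ => hterm j, Finset.sum_add_distrib, ← Finset.mul_sum, h2,
    Finset.sum_const, Finset.card_univ, Fintype.card_fin]
  simp
  ring

lemma quad_xv {n : ℕ} (hn : 5 ≤ n) :
    haveI : NeZero n := ⟨by omega⟩
    ∑ j : Fin n, (xv n (j + 1) - xv n j) ^ 2 = n - n * Real.cos (th n) := by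
  haveI : NeZero n := ⟨by omega⟩
  have s0 := sum_cos_ab hn 0 2 (not_dvd_of_lt hn (by norm_num) (by norm_num))
  have s1 := sum_cos_ab hn 1 2 (not_dvd_of_lt hn (by norm_num) (by norm_num))
  have s2 := sum_cos_ab hn 2 2 (not_dvd_of_lt hn (by norm_num) (by norm_num))
  have hterm : ∀ j : Fin n, (xv n (j + 1) - xv n j) ^ 2
      = (1 - Real.cos (th n))
        + (1/2) * Real.cos (((2:ℝ) + (2:ℝ) * ((j:ℕ):ℝ)) * th n)
        + (1/2) * Real.cos (((0:ℝ) + (2:ℝ) * ((j:ℕ):ℝ)) * th n)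
        - Real.cos (((1:ℝ) + (2:ℝ) * ((j:ℕ):ℝ)) * th n) := by
    intro j
    rw [xv_succ hn j, xv_eq]
    have c1 := Real.cos_sq ((((j:ℕ):ℝ) + 1) * th n)
    rw [show (2:ℝ) * (((((j:ℕ):ℝ)) + 1) * th n) = ((2:ℝ) + (2:ℝ) * ((j:ℕ):ℝ)) * th n by ring] at c1
    have c2 := Real.cos_sq (((j:ℕ):ℝ) * th n)
    rw [show (2:ℝ) * (((j:ℕ):ℝ) * th n) = ((0:ℝ) + (2:ℝ) * ((j:ℕ):ℝ)) * th n by ring] at c2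
    have c3 : Real.cos ((((j:ℕ):ℝ) + 1) * th n) * Real.cos (((j:ℕ):ℝ) * th n)
        = (Real.cos (((1:ℝ) + (2:ℝ) * ((j:ℕ):ℝ)) * th n) + Real.cos (th n)) / 2 := by
      rw [show ((1:ℝ) + (2:ℝ) * ((j:ℕ):ℝ)) * th n
            = ((((j:ℕ):ℝ) + 1) * th n) + (((j:ℕ):ℝ) * th n) by ring,
          show th n = ((((j:ℕ):ℝ) + 1) * th n) - (((j:ℕ):ℝ) * th n) by ring,
          Real.cos_add, Real.cos_sub]
      ring
    linear_combination c1 + c2 - 2 * c3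
  push_cast at s0 s1 s2
  rw [Finset.sum_congr rfl fun j _ => hterm j]
  rw [Finset.sum_sub_distrib, Finset.sum_add_distrib, Finset.sum_add_distrib,
    ← Finset.mul_sum, ← Finset.mul_sum, s0, s1, s2, Finset.sum_const, Finset.card_univ,
    Fintype.card_fin]
  simp
  ring
section Quad
variable {V : Type*} [Fintype V] [DecidableEq V]

lemma quad_eq (G : SimpleGraph V) [inst : DecidableRel G.Adj] (x : V → ℝ) :
    x ⬝ᵥ (G.lapMatrix ℝ *ᵥ x) = (∑ i, ∑ j, if G.Adj i j then (x i - x j)^2 else 0) / 2 := by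
  rw [← Matrix.toLinearMap₂'_apply', SimpleGraph.lapMatrix_toLinearMap₂']

lemma quad_nonneg (G : SimpleGraph V) [inst : DecidableRel G.Adj] (x : V → ℝ) :
    0 ≤ x ⬝ᵥ (G.lapMatrix ℝ *ᵥ x) := by
  rw [quad_eq]
  apply div_nonneg _ (by norm_num)
  apply Finset.sum_nonneg fun i _ => Finset.sum_nonneg fun j _ => ?_
  positivity

lemma quad_mono {G H : SimpleGraph V} [instG : DecidableRel G.Adj]
    [instH : DecidableRel H.Adj] (h : G ≤ H) (x : V → ℝ) :
    x ⬝ᵥ (G.lapMatrix ℝ *ᵥ x) ≤ x ⬝ᵥ (H.lapMatrix ℝ *ᵥ x) := by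
  rw [quad_eq, quad_eq]
  gcongr with i _ j _
  by_cases hG : G.Adj i j
  · rw [if_pos hG, if_pos (h hG)]
  · rw [if_neg hG]
    by_cases hH : H.Adj i j
    · rw [if_pos hH]; positivity
    · rw [if_neg hH]

lemma sumsq_pos {x : V → ℝ} (hx : x ≠ 0) : 0 < ∑ v, (x v) ^ 2 := by
  rcases Function.ne_iff.mp hx with ⟨v, hv⟩
  have hv' : x v ≠ 0 := by simpa using hv
  have : (0:ℝ) < (x v)^2 := (sq_nonneg _).lt_of_ne (Ne.symm (pow_ne_zero 2 hv'))
  refine Finset.sum_pos' (fun u _ => by positivity) ⟨v, Finset.mem_univ v, this⟩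

end Quad

lemma cycle_adj_iff {n : ℕ} (hn : 5 ≤ n) (a b : Fin n) :
    haveI : NeZero n := ⟨by omega⟩
    (cycleGraph n).Adj a b ↔ b = a + 1 ∨ a = b + 1 := by
  obtain ⟨m, hm⟩ : ∃ m, n = m + 2 := ⟨n - 2, by omega⟩
  subst hm
  rw [cycleGraph_adj]
  constructor
  · rintro (h | h)
    · right; exact sub_eq_iff_eq_add'.mp h
    · left; exact sub_eq_iff_eq_add'.mp h
  · rintro (rfl | rfl)
    · right; exact sub_eq_iff_eq_add'.mpr rfl
    · left; exact sub_eq_iff_eq_add'.mpr rfl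

lemma quad_cycle {n : ℕ} (hn : 5 ≤ n) [inst : DecidableRel (cycleGraph n).Adj] (x : Fin n → ℝ) :
    haveI : NeZero n := ⟨by omega⟩
    x ⬝ᵥ ((cycleGraph n).lapMatrix ℝ *ᵥ x) = ∑ j : Fin n, (x (j+1) - x j)^2 := by
  haveI : NeZero n := ⟨by omega⟩
  rw [quad_eq]
  have hone : ((1 : Fin n) : ℕ) = 1 := by
    rw [Fin.val_one']; exact Nat.mod_eq_of_lt (by omega)
  have hpm : ∀ a : Fin n, a + 1 ≠ a - 1 := by
    intro a h
    have h2 : (1 : Fin n) = -1 := by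
      have := add_left_cancel (a := a) (by rw [h]; abel : a + 1 = a + (-1))
      exact this
    have h3 : (1 : Fin n) + 1 = 0 := by nth_rewrite 1 [h2]; exact neg_add_cancel 1
    have h4 : ((1 : Fin n) + 1).val = 2 := by
      rw [Fin.val_add, hone]
      exact Nat.mod_eq_of_lt (by omega)
    rw [h3] at h4
    simp at h4
  have inner : ∀ a : Fin n, (∑ b, if (cycleGraph n).Adj a b then (x a - x b)^2 else 0)
      = (x a - x (a+1))^2 + (x a - x (a-1))^2 := by
    intro a
    rw [← Finset.sum_filter]
    have hfil : Finset.univ.filter (fun b => (cycleGraph n).Adj a b) = {a + 1, a - 1} := by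
      ext b
      rw [Finset.mem_filter, Finset.mem_insert, Finset.mem_singleton]
      rw [cycle_adj_iff hn]
      constructor
      · rintro ⟨-, h | h⟩
        · exact Or.inl h
        · right
          rw [h]; abel
      · rintro (rfl | rfl)
        · exact ⟨Finset.mem_univ _, Or.inl rfl⟩
        · refine ⟨Finset.mem_univ _, Or.inr ?_⟩
          abel
    rw [hfil, Finset.sum_insert (by simpa using hpm a), Finset.sum_singleton]
  rw [Finset.sum_congr rfl fun a _ => inner a, Finset.sum_add_distrib]
  have e1 : ∑ a : Fin n, (x a - x (a+1))^2 = ∑ a : Fin n, (x (a+1) - x a)^2 := by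
    refine Finset.sum_congr rfl fun a _ => by ring
  have e2 : ∑ a : Fin n, (x a - x (a-1))^2 = ∑ a : Fin n, (x (a+1) - x a)^2 := by
    refine Fintype.sum_equiv (Equiv.subRight (1 : Fin n)) _ _ fun a => ?_
    simp only [Equiv.subRight_apply, sub_add_cancel]
  rw [e1, e2]
  ring

lemma chord_xv {n : ℕ} (hn : 5 ≤ n) {c : ℕ} (hc : c ≤ n) (a b : Fin n)
    (ha : (a : ℕ) = c) (hb : (b : ℕ) = n - c) : xv n a = xv n b := by
  rw [xv, xv]
  have h1 : ((a:ℕ):ℤ) = (c:ℤ) := by exact_mod_cast ha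
  have hb' : ((b:ℕ):ℤ) = (n:ℤ) - c := by
    rw [hb]; push_cast [hc]; ring
  have hcong : om n ^ ((b:ℕ):ℤ) = om n ^ (-(c:ℤ)) := by
    apply om_congr (by omega : n ≠ 0)
    show ((b:ℕ):ℤ) % n = (-(c:ℤ)) % n
    rw [hb']
    exact (Int.modEq_iff_dvd.mpr ⟨-1, by ring⟩ : ((n:ℤ) - c) ≡ (-(c:ℤ)) [ZMOD (n:ℤ)])
  rw [h1, hcong, ← om_conj]
  exact (Complex.conj_re _).symm

lemma cycle_le_H12 {n k : ℕ} (i : Fin k → ℕ) : cycleGraph n ≤ H12 n k i := le_sup_left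

lemma quad_H12_xv {n k : ℕ} (hn : 5 ≤ n) (i : Fin k → ℕ) (hi : ∀ j, i j ≤ n)
    [instH : DecidableRel (H12 n k i).Adj] [instC : DecidableRel (cycleGraph n).Adj] :
    xv n ⬝ᵥ ((H12 n k i).lapMatrix ℝ *ᵥ xv n) = xv n ⬝ᵥ ((cycleGraph n).lapMatrix ℝ *ᵥ xv n) := by
  rw [quad_eq, quad_eq]
  congr 1
  refine Finset.sum_congr rfl fun a _ => Finset.sum_congr rfl fun b _ => ?_
  by_cases hC : (cycleGraph n).Adj a b
  · rw [if_pos hC, if_pos (cycle_le_H12 i hC)]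
  · rw [if_neg hC]
    by_cases hH : (H12 n k i).Adj a b
    · rw [if_pos hH]
      have hxy : xv n a = xv n b := by
        have hH' := hH
        rw [H12, cyclePlusChords, SimpleGraph.sup_adj] at hH'
        rcases hH' with h | h
        · exact absurd h hC
        · rw [SimpleGraph.fromEdgeSet_adj] at h
          obtain ⟨⟨j, a', b', ha', hb', he⟩, hne⟩ := h
          rw [Sym2.eq_iff] at he
          rcases he with ⟨h1, h2⟩ | ⟨h1, h2⟩
          · exact chord_xv hn (hi j) a b (by rw [h1, ha']) (by rw [h2, hb'])
          · exact (chord_xv hn (hi j) b a (by rw [h2, ha']) (by rw [h1, hb'])).symm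
      rw [hxy, sub_self]
      norm_num
    · rw [if_neg hH]

lemma xv_ne_zero {n : ℕ} (hn : 5 ≤ n) : xv n ≠ 0 := by
  haveI : NeZero n := ⟨by omega⟩
  intro h
  have h0 : xv n 0 = 0 := congrFun h 0
  rw [xv] at h0
  simp at h0

def qset {V : Type*} [Fintype V] [DecidableEq V] (G : SimpleGraph V)
    [inst : DecidableRel G.Adj] : Set ℝ :=
  { r : ℝ | ∃ x : V → ℝ, x ≠ 0 ∧ (∑ v, x v) = 0 ∧
    r = (x ⬝ᵥ (G.lapMatrix ℝ *ᵥ x)) / (∑ v, (x v) ^ 2) }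

lemma algCon_eq_qset {V : Type*} [Fintype V] [DecidableEq V] (G : SimpleGraph V)
    [inst : DecidableRel G.Adj] : algCon G = sInf (qset G) := by
  unfold algCon qset
  congr!

theorem algCon_H1_eq_cycle {n k : ℕ} (hodd : Odd n) (hn : 5 ≤ n) (hk : 1 ≤ k)
    (i : Fin k → ℕ) (hmono : Monotone i) (hi : ∀ j, 1 ≤ i j ∧ i j ≤ (n - 3) / 2) :
    algCon (H12 n k i) = algCon (SimpleGraph.cycleGraph n) := by
  haveI : NeZero n := ⟨by omega⟩
  have hi' : ∀ j, i j ≤ n := fun j => le_trans (hi j).2 (by omega)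
  letI instH : DecidableRel (H12 n k i).Adj := Classical.decRel _
  letI instC : DecidableRel (SimpleGraph.cycleGraph n).Adj := Classical.decRel _
  have hnR : (0:ℝ) < n := by
    have : (5:ℝ) ≤ n := by exact_mod_cast hn
    linarith
  have hsum0 : ∑ v, xv n v = 0 := sum_xv hn
  have hx0 : xv n ≠ 0 := xv_ne_zero hn
  have hss : ∑ v, (xv n v)^2 = (n:ℝ) / 2 := sum_xv_sq hn
  have hQC : xv n ⬝ᵥ ((SimpleGraph.cycleGraph n).lapMatrix ℝ *ᵥ xv n)
      = (n:ℝ) - n * Real.cos (th n) := by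
    rw [quad_cycle hn]
    exact quad_xv hn
  have hQH : xv n ⬝ᵥ ((H12 n k i).lapMatrix ℝ *ᵥ xv n) = (n:ℝ) - n * Real.cos (th n) := by
    rw [quad_H12_xv hn i hi', hQC]
  have hval : ((n:ℝ) - n * Real.cos (th n)) / ((n:ℝ)/2) = 2 - 2 * Real.cos (th n) := by
    field_simp
  have memC : (2 - 2 * Real.cos (th n)) ∈ qset (SimpleGraph.cycleGraph n) :=
    ⟨xv n, hx0, hsum0, by rw [hQC, hss, hval]⟩
  have memH : (2 - 2 * Real.cos (th n)) ∈ qset (H12 n k i) :=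
    ⟨xv n, hx0, hsum0, by rw [hQH, hss, hval]⟩
  have bddC : BddBelow (qset (SimpleGraph.cycleGraph n)) := by
    refine ⟨0, ?_⟩
    rintro r ⟨x, hx, hsx, rfl⟩
    exact div_nonneg (quad_nonneg _ _) (Finset.sum_nonneg fun v _ => sq_nonneg _)
  have bddH : BddBelow (qset (H12 n k i)) := by
    refine ⟨0, ?_⟩
    rintro r ⟨x, hx, hsx, rfl⟩
    exact div_nonneg (quad_nonneg _ _) (Finset.sum_nonneg fun v _ => sq_nonneg _)
  have hlow : ∀ r ∈ qset (SimpleGraph.cycleGraph n), (2 - 2 * Real.cos (th n)) ≤ r := by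
    rintro r ⟨x, hx, hsx, rfl⟩
    have hpos := sumsq_pos hx
    rw [le_div_iff₀ hpos, quad_cycle hn]
    exact wirtinger hn x hsx
  have h1 : (2 - 2 * Real.cos (th n)) ≤ sInf (qset (SimpleGraph.cycleGraph n)) :=
    le_csInf ⟨_, memC⟩ hlow
  have h2 : sInf (qset (SimpleGraph.cycleGraph n)) ≤ sInf (qset (H12 n k i)) := by
    apply le_csInf ⟨_, memH⟩
    rintro r ⟨x, hx, hsx, rfl⟩
    have hpos := sumsq_pos hx
    have hQ : x ⬝ᵥ ((SimpleGraph.cycleGraph n).lapMatrix ℝ *ᵥ x)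
        ≤ x ⬝ᵥ ((H12 n k i).lapMatrix ℝ *ᵥ x) := quad_mono (cycle_le_H12 i) x
    have hmem : (x ⬝ᵥ ((SimpleGraph.cycleGraph n).lapMatrix ℝ *ᵥ x)) / (∑ v, (x v)^2)
        ∈ qset (SimpleGraph.cycleGraph n) := ⟨x, hx, hsx, rfl⟩
    calc sInf (qset (SimpleGraph.cycleGraph n)) ≤ _ := csInf_le bddC hmem
      _ ≤ (x ⬝ᵥ ((H12 n k i).lapMatrix ℝ *ᵥ x)) / (∑ v, (x v)^2) := by gcongr
  have h3 : sInf (qset (H12 n k i)) ≤ (2 - 2 * Real.cos (th n)) := csInf_le bddH memH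
  rw [algCon_eq_qset, algCon_eq_qset]
  linarith
end

section
/- Let G be connected with Fiedler vector X attaining maximum at v_τ and minimum at v₀, and let H be a proper spanning subgraph of G obtained by replacing an edge v_a v_b (with x(v_a) < x(v_b)) by a path v_a u₁ ⋯ u_g v_b through vertices with x(v_a) < x(u₁) ≤ ⋯ ≤ x(u_g) ≤ x(v_b), g ≥ 1, keeping all other edges. If α(H) = α(G), then X is also a Fiedler vector of H; examining the eigenvalue equation at v_b yields a contradiction, so in fact α(H) < α(G). -/
open Matrix SimpleGraph

section Aux

open Finset

variable {V : Type*} [Fintype V] [DecidableEq V]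

lemma lap_irrel (K : SimpleGraph V) (i1 i2 : DecidableRel K.Adj) :
    @SimpleGraph.lapMatrix V ℝ _ K i1 _ _ = @SimpleGraph.lapMatrix V ℝ _ K i2 _ _ := by
  congr!

/-- classical-instance Laplacian -/
noncomputable def lapC (K : SimpleGraph V) : Matrix V V ℝ :=
  letI := Classical.decRel K.Adj
  K.lapMatrix ℝ

lemma lapC_eq (K : SimpleGraph V) [inst : DecidableRel K.Adj] :
    lapC K = K.lapMatrix ℝ := lap_irrel K _ inst

lemma algCon_eq (K : SimpleGraph V) :
    algCon K = sInf { r : ℝ | ∃ x : V → ℝ, x ≠ 0 ∧ (∑ v, x v) = 0 ∧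
      r = (x ⬝ᵥ (lapC K *ᵥ x)) / (∑ v, (x v) ^ 2) } := rfl

/-- classical quadratic form -/
noncomputable def Qf (K : SimpleGraph V) (x : V → ℝ) : ℝ := x ⬝ᵥ (lapC K *ᵥ x)

lemma Qf_form (K : SimpleGraph V) [inst : DecidableRel K.Adj] (x : V → ℝ) :
    Qf K x = (∑ i : V, ∑ j : V, if K.Adj i j then (x i - x j)^2 else 0) / 2 := by
  rw [Qf, lapC_eq, ← toLinearMap₂'_apply', lapMatrix_toLinearMap₂']

lemma Qf_nonneg (K : SimpleGraph V) (x : V → ℝ) : 0 ≤ Qf K x := by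
  letI := Classical.decRel K.Adj
  rw [Qf_form]
  positivity

lemma Qf_mono {K K' : SimpleGraph V} (h : K ≤ K') (x : V → ℝ) : Qf K x ≤ Qf K' x := by
  letI := Classical.decRel K.Adj
  letI := Classical.decRel K'.Adj
  rw [Qf_form, Qf_form]
  have h2 : (0:ℝ) < 2 := by norm_num
  rw [div_le_div_iff_of_pos_right h2]
  refine Finset.sum_le_sum fun i _ => Finset.sum_le_sum fun j _ => ?_
  by_cases hK : K.Adj i j
  · rw [if_pos hK, if_pos (h hK)]
  · rw [if_neg hK]
    positivity

lemma Qf_sup_le (K K' : SimpleGraph V) (x : V → ℝ) :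
    Qf (K ⊔ K') x ≤ Qf K x + Qf K' x := by
  letI := Classical.decRel K.Adj
  letI := Classical.decRel K'.Adj
  letI := Classical.decRel (K ⊔ K').Adj
  rw [Qf_form, Qf_form, Qf_form, ← add_div]
  have h2 : (0:ℝ) < 2 := by norm_num
  rw [div_le_div_iff_of_pos_right h2]
  rw [← Finset.sum_add_distrib]
  refine Finset.sum_le_sum fun i _ => ?_
  rw [← Finset.sum_add_distrib]
  refine Finset.sum_le_sum fun j _ => ?_
  by_cases hK : K.Adj i j <;> by_cases hK' : K'.Adj i j <;>
    simp [SimpleGraph.sup_adj, hK, hK'] <;> positivity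

lemma pair_sum (p q : V) (hpq : p ≠ q) (f : V → V → ℝ) :
    (∑ i : V, ∑ j : V, if s(i,j) = s(p,q) then f i j else 0) = f p q + f q p := by
  have key : ∀ i j : V, (if s(i,j) = s(p,q) then f i j else 0)
      = (if i = p ∧ j = q then f p q else 0) + (if i = q ∧ j = p then f q p else 0) := by
    intro i j
    by_cases h : s(i,j) = s(p,q)
    · rw [Sym2.eq_iff] at h
      rcases h with ⟨rfl, rfl⟩ | ⟨rfl, rfl⟩
      · simp [Sym2.eq_iff, hpq, (Ne.symm hpq)]
      · simp [Sym2.eq_iff, hpq, (Ne.symm hpq)]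
    · have h' : ¬ (i = p ∧ j = q) := by
        rintro ⟨rfl, rfl⟩; exact h rfl
      have h'' : ¬ (i = q ∧ j = p) := by
        rintro ⟨rfl, rfl⟩; exact h (Sym2.eq_swap)
      simp [h, h', h'']
  simp_rw [key, Finset.sum_add_distrib, ite_and]
  simp [Finset.sum_ite_eq', Finset.sum_ite_eq]

lemma Qf_single_le (p q : V) (x : V → ℝ) :
    Qf (SimpleGraph.fromEdgeSet {s(p,q)} : SimpleGraph V) x ≤ (x p - x q)^2 := by
  letI := Classical.decRel (SimpleGraph.fromEdgeSet {s(p,q)} : SimpleGraph V).Adj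
  rw [Qf_form]
  by_cases hpq : p = q
  · subst hpq
    have : ∀ i j : V, ¬ (SimpleGraph.fromEdgeSet {s(p,p)} : SimpleGraph V).Adj i j := by
      intro i j h
      rw [SimpleGraph.fromEdgeSet_adj] at h
      obtain ⟨hm, hne⟩ := h
      simp only [Set.mem_singleton_iff, Sym2.eq_iff] at hm
      rcases hm with ⟨rfl, rfl⟩ | ⟨rfl, rfl⟩ <;> exact hne rfl
    simp only [this, if_false]
    simp only [Finset.sum_const_zero, zero_div]
    positivity
  · have hcong : ∀ i j : V,
        (if (SimpleGraph.fromEdgeSet {s(p,q)} : SimpleGraph V).Adj i j then (x i - x j)^2 else 0)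
        = (if s(i,j) = s(p,q) then (x i - x j)^2 else 0) := by
      intro i j
      by_cases h : s(i,j) = s(p,q)
      · rw [if_pos h, if_pos]
        rw [SimpleGraph.fromEdgeSet_adj]
        refine ⟨by simpa using h, ?_⟩
        rw [Sym2.eq_iff] at h
        rcases h with ⟨rfl, rfl⟩ | ⟨rfl, rfl⟩
        · exact hpq
        · exact Ne.symm hpq
      · rw [if_neg h, if_neg]
        rw [SimpleGraph.fromEdgeSet_adj]
        rintro ⟨hm, -⟩
        exact h (by simpa using hm)
    simp_rw [hcong]
    rw [pair_sum p q hpq]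
    nlinarith [sq_nonneg (x p - x q)]

lemma sq_sum_le (m : ℕ) (c : ℕ → ℝ) (h : ∀ j, j < m → 0 ≤ c j) :
    ∑ j ∈ Finset.range m, (c j)^2 ≤ (∑ j ∈ Finset.range m, c j)^2 := by
  induction m with
  | zero => simp
  | succ n ih =>
    have hS : 0 ≤ ∑ j ∈ Finset.range n, c j :=
      Finset.sum_nonneg fun j hj => h j (Nat.lt_succ_of_lt (Finset.mem_range.mp hj))
    rw [Finset.sum_range_succ, Finset.sum_range_succ]
    have hcn : 0 ≤ c n := h n (by omega)
    have ihn : ∑ j ∈ Finset.range n, (c j)^2 ≤ (∑ j ∈ Finset.range n, c j)^2 :=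
      ih fun j hj => h j (by omega)
    nlinarith [hS, hcn]

lemma Qf_bot (x : V → ℝ) : Qf (⊥ : SimpleGraph V) x = 0 := by
  rw [Qf_form]
  simp

lemma Qf_chain_le (u : ℕ → V) (x : V → ℝ) (m : ℕ) :
    Qf (SimpleGraph.fromEdgeSet {e | ∃ j, j < m ∧ e = s(u j, u (j+1))} : SimpleGraph V) x
      ≤ ∑ j ∈ Finset.range m, (x (u (j+1)) - x (u j))^2 := by
  induction m with
  | zero =>
    have hset : {e : Sym2 V | ∃ j, j < 0 ∧ e = s(u j, u (j+1))} = ∅ := by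
      ext e; simp
    rw [hset, SimpleGraph.fromEdgeSet_empty, Qf_bot]
    simp
  | succ n ih =>
    have hset : {e : Sym2 V | ∃ j, j < n + 1 ∧ e = s(u j, u (j+1))}
        = {e : Sym2 V | ∃ j, j < n ∧ e = s(u j, u (j+1))} ∪ {s(u n, u (n+1))} := by
      ext e
      simp only [Set.mem_setOf_eq, Set.mem_union, Set.mem_singleton_iff]
      constructor
      · rintro ⟨j, hj, rfl⟩
        rcases Nat.lt_or_ge j n with h | h
        · exact Or.inl ⟨j, h, rfl⟩
        · have : j = n := by omega
          subst this; exact Or.inr rfl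
      · rintro (⟨j, hj, rfl⟩ | rfl)
        · exact ⟨j, by omega, rfl⟩
        · exact ⟨n, by omega, rfl⟩
    rw [hset, SimpleGraph.fromEdgeSet_union, Finset.sum_range_succ]
    calc Qf _ x ≤ _ + _ := Qf_sup_le _ _ x
      _ ≤ _ := add_le_add ih (Qf_single_le (u n) (u (n+1)) x)
      _ = _ := by rw [show (x (u n) - x (u (n+1)))^2 = (x (u (n+1)) - x (u n))^2 from by ring]

lemma sum_lapC (K : SimpleGraph V) (x : V → ℝ) : ∑ v, (lapC K *ᵥ x) v = 0 := by
  letI := Classical.decRel K.Adj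
  rw [lapC_eq]
  have hrow : ∀ j : V, ∑ k : V, K.lapMatrix ℝ j k = 0 := by
    intro j
    have h1 := congrFun (lapMatrix_mulVec_const_eq_zero (R := ℝ) K) j
    simpa [Matrix.mulVec, dotProduct] using h1
  have hsym : ∀ v j : V, K.lapMatrix ℝ v j = K.lapMatrix ℝ j v := by
    intro v j
    exact ((isSymm_lapMatrix ℝ K).apply v j).symm
  calc ∑ v, (K.lapMatrix ℝ *ᵥ x) v = ∑ v, ∑ j, K.lapMatrix ℝ v j * x j := by
        simp [Matrix.mulVec, dotProduct]
    _ = ∑ j, ∑ v, K.lapMatrix ℝ v j * x j := Finset.sum_comm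
    _ = ∑ j, (∑ v, K.lapMatrix ℝ j v) * x j := by
        refine Finset.sum_congr rfl fun j _ => ?_
        rw [Finset.sum_mul]
        exact Finset.sum_congr rfl fun v _ => by rw [hsym]
    _ = 0 := by simp [hrow]

lemma dot_lapC_symm (K : SimpleGraph V) (x y : V → ℝ) :
    x ⬝ᵥ (lapC K *ᵥ y) = y ⬝ᵥ (lapC K *ᵥ x) := by
  letI := Classical.decRel K.Adj
  rw [lapC_eq]
  rw [Matrix.dotProduct_mulVec, ← Matrix.mulVec_transpose, (isSymm_lapMatrix ℝ K).eq,
    dotProduct_comm]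

lemma lapC_apply (K : SimpleGraph V) [inst : DecidableRel K.Adj] (x : V → ℝ) (v : V) :
    (lapC K *ᵥ x) v = ∑ j : V, if K.Adj v j then (x v - x j) else 0 := by
  rw [lapC_eq, lapMatrix_mulVec_apply]
  have hnb : K.neighborFinset v = Finset.univ.filter (K.Adj v) := by
    ext w; simp
  rw [hnb, ← Finset.sum_filter, Finset.sum_sub_distrib, Finset.sum_const, ← hnb,
    nsmul_eq_mul, card_neighborFinset_eq_degree]

lemma sum_sq_pos {x : V → ℝ} (hx : x ≠ 0) : 0 < ∑ v, (x v)^2 := by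
  obtain ⟨v, hv⟩ := Function.ne_iff.mp hx
  refine Finset.sum_pos' (fun i _ => sq_nonneg _) ⟨v, Finset.mem_univ v, ?_⟩
  have hv' : x v ≠ 0 := by simpa using hv
  exact lt_of_le_of_ne (sq_nonneg _) (Ne.symm (pow_ne_zero 2 hv'))

lemma algCon_eq' (K : SimpleGraph V) :
    algCon K = sInf { r : ℝ | ∃ x : V → ℝ, x ≠ 0 ∧ (∑ v, x v) = 0 ∧
      r = Qf K x / (∑ v, (x v) ^ 2) } := rfl

lemma algCon_bdd (K : SimpleGraph V) :
    ∀ r ∈ { r : ℝ | ∃ x : V → ℝ, x ≠ 0 ∧ (∑ v, x v) = 0 ∧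
      r = Qf K x / (∑ v, (x v) ^ 2) }, (0:ℝ) ≤ r := by
  rintro r ⟨x, hx, -, rfl⟩
  exact div_nonneg (Qf_nonneg K x) (Finset.sum_nonneg fun v _ => sq_nonneg _)

lemma algCon_le (K : SimpleGraph V) {x : V → ℝ} (hx : x ≠ 0) (hs : (∑ v, x v) = 0) :
    algCon K ≤ Qf K x / (∑ v, (x v)^2) := by
  rw [algCon_eq']
  exact csInf_le ⟨0, fun r hr => algCon_bdd K r hr⟩ ⟨x, hx, hs, rfl⟩

lemma algCon_mul_le (K : SimpleGraph V) {x : V → ℝ} (hs : (∑ v, x v) = 0) :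
    algCon K * (∑ v, (x v)^2) ≤ Qf K x := by
  by_cases hx : x = 0
  · subst hx
    simp [Qf, Matrix.mulVec_zero, dotProduct_zero]
  · have hS : 0 < ∑ v, (x v)^2 := sum_sq_pos hx
    have h := algCon_le K hx hs
    rw [le_div_iff₀ hS] at h
    exact h

lemma eigen_of_min (K : SimpleGraph V) (α : ℝ) (hαK : algCon K = α) (X : V → ℝ)
    (hsX : ∑ v, X v = 0) (hQX : Qf K X = α * ∑ v, (X v)^2) :
    lapC K *ᵥ X = α • X := by
  have key : ∀ Y : V → ℝ, (∑ v, Y v) = 0 → Y ⬝ᵥ (lapC K *ᵥ X) - α * (Y ⬝ᵥ X) = 0 := by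
    intro Y hsY
    set c := Qf K Y - α * ∑ v, (Y v)^2 with hc
    have hc0 : 0 ≤ c := by
      have h := algCon_mul_le K hsY
      rw [hαK] at h
      rw [hc]; linarith
    set bb := 2 * (Y ⬝ᵥ (lapC K *ᵥ X) - α * (Y ⬝ᵥ X)) with hbb
    have hquad : ∀ t : ℝ, 0 ≤ c * t^2 + bb * t := by
      intro t
      have hsZ : ∑ v, (X + t • Y) v = 0 := by
        simp [Finset.sum_add_distrib, ← Finset.mul_sum, hsX, hsY]
      have h1 := algCon_mul_le K hsZ
      rw [hαK] at h1
      have hQexp : Qf K (X + t • Y)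
          = Qf K X + 2*t*(Y ⬝ᵥ (lapC K *ᵥ X)) + t^2 * Qf K Y := by
        simp only [Qf, Matrix.mulVec_add, Matrix.mulVec_smul, dotProduct_add, add_dotProduct,
          dotProduct_smul, smul_dotProduct, smul_eq_mul]
        rw [dot_lapC_symm K X Y]
        ring
      have hSexp : ∑ v, ((X + t • Y) v)^2
          = (∑ v, (X v)^2) + 2*t*(X ⬝ᵥ Y) + t^2 * ∑ v, (Y v)^2 := by
        have hpt : ∀ v, ((X + t • Y) v)^2
            = (X v)^2 + 2*t*(X v * Y v) + t^2 * (Y v)^2 := by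
          intro v; simp only [Pi.add_apply, Pi.smul_apply, smul_eq_mul]; ring
        simp_rw [hpt]
        rw [Finset.sum_add_distrib, Finset.sum_add_distrib, ← Finset.mul_sum, ← Finset.mul_sum]
        rfl
      rw [hQexp, hSexp, hQX] at h1
      have hdc : Y ⬝ᵥ X = X ⬝ᵥ Y := dotProduct_comm Y X
      rw [hc, hbb, hdc]
      nlinarith [h1]
    have hbb0 : bb = 0 := by
      have hc1 : (0:ℝ) < c + 1 := by linarith
      have h2 := hquad (-(bb / (c + 1)))
      rw [mul_neg, neg_sq, div_pow] at h2
      have h3 : 0 ≤ (c * bb^2 - bb^2 * (c+1)) / (c+1)^2 := by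
        have : c * (bb ^ 2 / (c + 1) ^ 2) + -(bb * (bb / (c + 1)))
            = (c * bb^2 - bb^2 * (c+1)) / (c+1)^2 := by
          field_simp
          ring
        linarith [this ▸ h2]
      have h4 : 0 ≤ c * bb^2 - bb^2 * (c+1) := by
        have := (div_nonneg_iff.mp h3)
        rcases this with ⟨h, -⟩ | ⟨h, hd⟩
        · exact h
        · nlinarith [sq_nonneg (c+1), hc1]
      nlinarith [sq_nonneg bb]
    rw [hbb] at hbb0
    linarith
  have w : V → ℝ := fun v => (lapC K *ᵥ X) v - α * X v
  set w : V → ℝ := fun v => (lapC K *ᵥ X) v - α * X v with hw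
  have hsw : ∑ v, w v = 0 := by
    rw [hw]
    rw [Finset.sum_sub_distrib, ← Finset.mul_sum, sum_lapC, hsX]
    ring
  have hkey := key w hsw
  have hexp : w ⬝ᵥ (lapC K *ᵥ X) - α * (w ⬝ᵥ X) = ∑ v, (w v)^2 := by
    simp only [dotProduct, ← Finset.mul_sum, ← Finset.sum_sub_distrib, Finset.mul_sum]
    refine Finset.sum_congr rfl fun v _ => ?_
    rw [hw]
    ring
  rw [hexp] at hkey
  have hwz : ∀ v, w v = 0 := by
    intro v
    have h0 := (Finset.sum_eq_zero_iff_of_nonneg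
      (fun i _ => sq_nonneg (w i))).mp hkey v (Finset.mem_univ v)
    exact pow_eq_zero_iff (two_ne_zero) |>.mp h0
  funext v
  have hv : (lapC K *ᵥ X) v - α * X v = 0 := hwz v
  simp only [Pi.smul_apply, smul_eq_mul]
  linarith

lemma Qf_delete (K : SimpleGraph V) [DecidableRel K.Adj] {p q : V} (hpq : K.Adj p q)
    (x : V → ℝ) :
    Qf K x = Qf (K.deleteEdges {s(p,q)}) x + (x p - x q)^2 := by
  letI := Classical.decRel (K.deleteEdges {s(p,q)}).Adj
  rw [Qf_form, Qf_form]
  have key : ∀ i j : V, (if K.Adj i j then (x i - x j)^2 else 0)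
      = (if (K.deleteEdges {s(p,q)}).Adj i j then (x i - x j)^2 else 0)
        + (if s(i,j) = s(p,q) then (x i - x j)^2 else 0) := by
    intro i j
    by_cases h : s(i,j) = s(p,q)
    · have hKij : K.Adj i j := by
        rw [Sym2.eq_iff] at h
        rcases h with ⟨rfl, rfl⟩ | ⟨rfl, rfl⟩
        · exact hpq
        · exact hpq.symm
      rw [if_pos hKij, if_pos h, if_neg, zero_add]
      intro hdel
      rw [SimpleGraph.deleteEdges_adj] at hdel
      exact hdel.2 (by simpa using h)
    · rw [if_neg h, add_zero]
      by_cases hK : K.Adj i j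
      · rw [if_pos hK, if_pos]
        exact SimpleGraph.deleteEdges_adj.mpr ⟨hK, by simpa using h⟩
      · rw [if_neg hK, if_neg]
        intro hdel
        exact hK (SimpleGraph.deleteEdges_adj.mp hdel).1
  simp_rw [key, Finset.sum_add_distrib]
  rw [pair_sum p q hpq.ne]
  have hsym : (x q - x p)^2 = (x p - x q)^2 := by ring
  rw [hsym]
  ring

end Aux

theorem algCon_strict_decrease_of_edge_subdivision_replacement
    {V : Type*} [Fintype V] [DecidableEq V]
    (G : SimpleGraph V) [DecidableRel G.Adj] (hG : G.Connected) (hn : 2 ≤ Fintype.card V)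
    (X : V → ℝ) (hX : X ≠ 0) (heig : G.lapMatrix ℝ *ᵥ X = algCon G • X)
    (τ v₀ : V) (hmax : ∀ v, X v ≤ X τ) (hmin : ∀ v, X v₀ ≤ X v)
    (a b : V) (hab : G.Adj a b) (hXab : X a < X b)
    (g : ℕ) (hg : 1 ≤ g) (u : ℕ → V)
    (huinj : ∀ j k, j < g → k < g → u j = u k → j = k)
    (huab : ∀ j, j < g → u j ≠ a ∧ u j ≠ b)
    (hchain₀ : X a < X (u 0))
    (hchain : ∀ j, j + 1 < g → X (u j) ≤ X (u (j + 1)))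
    (hchain₁ : X (u (g - 1)) ≤ X b)
    (H : SimpleGraph V)
    (hH : H = (G.deleteEdges {s(a, b)}) ⊔ SimpleGraph.fromEdgeSet
      ({s(a, u 0)} ∪ {e | ∃ j, j + 1 < g ∧ e = s(u j, u (j + 1))} ∪ {s(u (g - 1), b)}))
    (hproper : H ≠ G) :
    algCon H < algCon G := by
  have heig' : lapC G *ᵥ X = algCon G • X := by rw [lapC_eq]; exact heig
  -- α ≠ 0
  have hαne : algCon G ≠ 0 := by
    intro h0
    rw [h0, zero_smul] at heig
    have hz : Matrix.toLin' (G.lapMatrix ℝ) X = 0 := by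
      rw [Matrix.toLin'_apply]; exact heig
    have hcst := (lapMatrix_mulVec_eq_zero_iff_forall_adj G).mp heig
    exact absurd (hcst a b hab) (ne_of_lt hXab)
  -- sum X = 0
  have hsX : ∑ v, X v = 0 := by
    have h1 := sum_lapC G X
    rw [heig'] at h1
    simp only [Pi.smul_apply, smul_eq_mul, ← Finset.mul_sum] at h1
    exact (mul_eq_zero.mp h1).resolve_left hαne
  -- Rayleigh value of X for G
  have hQGX : Qf G X = algCon G * ∑ v, (X v)^2 := by
    calc Qf G X = X ⬝ᵥ (algCon G • X) := by rw [Qf, heig']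
      _ = ∑ v, X v * (algCon G * X v) := rfl
      _ = algCon G * ∑ v, (X v)^2 := by
          rw [Finset.mul_sum]
          exact Finset.sum_congr rfl fun v _ => by ring
  -- chain setup
  set m := g - 1 with hm
  have hmlt : m < g := by omega
  have htel : ∑ j ∈ Finset.range m, (X (u (j+1)) - X (u j)) = X (u m) - X (u 0) :=
    Finset.sum_range_sub (fun j => X (u j)) m
  have hinc : ∀ j, j < m → 0 ≤ X (u (j+1)) - X (u j) := by
    intro j hj
    have := hchain j (by omega)
    linarith
  have hB : 0 ≤ X (u m) - X (u 0) := by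
    rw [← htel]
    exact Finset.sum_nonneg fun j hj => hinc j (Finset.mem_range.mp hj)
  -- quadratic form comparison
  have hQH1 : Qf H X ≤ Qf (G.deleteEdges {s(a,b)}) X
      + Qf (SimpleGraph.fromEdgeSet
          ({s(a, u 0)} ∪ {e | ∃ j, j + 1 < g ∧ e = s(u j, u (j + 1))} ∪ {s(u m, b)})) X := by
    rw [hH]
    exact Qf_sup_le _ _ X
  have hcs : {e : Sym2 V | ∃ j, j + 1 < g ∧ e = s(u j, u (j+1))}
      = {e : Sym2 V | ∃ j, j < m ∧ e = s(u j, u (j+1))} := by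
    ext e
    simp only [Set.mem_setOf_eq]
    constructor
    · rintro ⟨j, hj, rfl⟩; exact ⟨j, by omega, rfl⟩
    · rintro ⟨j, hj, rfl⟩; exact ⟨j, by omega, rfl⟩
  have hQE : Qf (SimpleGraph.fromEdgeSet
      ({s(a, u 0)} ∪ {e | ∃ j, j + 1 < g ∧ e = s(u j, u (j + 1))} ∪ {s(u m, b)})) X
      ≤ (X b - X a)^2 := by
    rw [hcs, SimpleGraph.fromEdgeSet_union, SimpleGraph.fromEdgeSet_union]
    have step1 := Qf_sup_le (SimpleGraph.fromEdgeSet {s(a, u 0)} ⊔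
      SimpleGraph.fromEdgeSet {e : Sym2 V | ∃ j, j < m ∧ e = s(u j, u (j+1))})
      (SimpleGraph.fromEdgeSet {s(u m, b)}) X
    have step2 := Qf_sup_le (SimpleGraph.fromEdgeSet {s(a, u 0)})
      (SimpleGraph.fromEdgeSet {e : Sym2 V | ∃ j, j < m ∧ e = s(u j, u (j+1))}) X
    have h1 := Qf_single_le a (u 0) X
    have h2 := Qf_chain_le u X m
    have h3 := Qf_single_le (u m) b X
    have h4 : ∑ j ∈ Finset.range m, (X (u (j+1)) - X (u j))^2
        ≤ (X (u m) - X (u 0))^2 := by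
      have := sq_sum_le m (fun j => X (u (j+1)) - X (u j)) hinc
      rw [htel] at this
      exact this
    have hA : 0 ≤ X (u 0) - X a := by linarith
    have hC : 0 ≤ X b - X (u m) := by linarith
    nlinarith [step1, step2, h1, h2, h3, h4, hA, hB, hC,
      mul_nonneg hA hB, mul_nonneg hA hC, mul_nonneg hB hC]
  have hQdel : Qf G X = Qf (G.deleteEdges {s(a,b)}) X + (X a - X b)^2 := Qf_delete G hab X
  have hQHle : Qf H X ≤ algCon G * ∑ v, (X v)^2 := by
    have hsq : (X b - X a)^2 = (X a - X b)^2 := by ring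
    rw [← hQGX]
    linarith
  -- suppose not
  by_contra hcon
  push_neg at hcon
  have hS : 0 < ∑ v, (X v)^2 := sum_sq_pos hX
  have hHle : algCon H * ∑ v, (X v)^2 ≤ Qf H X := algCon_mul_le H hsX
  have hαH : algCon H = algCon G := by
    have h1 : algCon G * ∑ v, (X v)^2 ≤ algCon H * ∑ v, (X v)^2 :=
      mul_le_mul_of_nonneg_right hcon (le_of_lt hS)
    have h2 : algCon H * ∑ v, (X v)^2 = algCon G * ∑ v, (X v)^2 := by linarith
    exact mul_right_cancel₀ (ne_of_gt hS) h2
  have hQHeq : Qf H X = algCon G * ∑ v, (X v)^2 := by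
    refine le_antisymm hQHle ?_
    rw [← hαH]
    exact hHle
  have heigH : lapC H *ᵥ X = algCon G • X :=
    eigen_of_min H (algCon G) hαH X hsX hQHeq
  -- contradiction at vertex b
  letI : DecidableRel H.Adj := Classical.decRel _
  have hGb' : (lapC G *ᵥ X) b = (lapC H *ᵥ X) b := by
    rw [heig', heigH]
  rw [lapC_apply G X b, lapC_apply H X b] at hGb'
  have hba : b ≠ a := hab.ne'
  have hbu : ∀ k, k < g → b ≠ u k := fun k hk => Ne.symm (huab k hk).2
  have hau : ∀ k, k < g → a ≠ u k := fun k hk => Ne.symm (huab k hk).1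
  have hadjH : ∀ j : V, H.Adj b j ↔ ((G.Adj b j ∧ j ≠ a) ∨ j = u m) := by
    intro j
    rw [hH]
    simp only [SimpleGraph.sup_adj, SimpleGraph.deleteEdges_adj, SimpleGraph.fromEdgeSet_adj,
      Set.mem_union, Set.mem_singleton_iff, Set.mem_setOf_eq]
    constructor
    · rintro (⟨hGbj, hne⟩ | ⟨hmem, hbj⟩)
      · left
        refine ⟨hGbj, ?_⟩
        rintro rfl
        exact hne (Sym2.eq_swap)
      · rcases hmem with (h1 | h2) | h3
        · exfalso
          rw [Sym2.eq_iff] at h1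
          rcases h1 with ⟨hba', -⟩ | ⟨hbu0, -⟩
          · exact hba hba'
          · exact hbu 0 (by omega) hbu0
        · exfalso
          obtain ⟨k, hk, heq⟩ := h2
          rw [Sym2.eq_iff] at heq
          rcases heq with ⟨hbk, -⟩ | ⟨hbk, -⟩
          · exact hbu k (by omega) hbk
          · exact hbu (k+1) (by omega) hbk
        · right
          rw [Sym2.eq_iff] at h3
          rcases h3 with ⟨hbm, -⟩ | ⟨-, hj⟩
          · exact absurd hbm (hbu m hmlt)
          · exact hj
    · rintro (⟨hGbj, hja⟩ | rfl)
      · left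
        refine ⟨hGbj, ?_⟩
        rw [Sym2.eq_iff]
        rintro (⟨hba', -⟩ | ⟨-, hja'⟩)
        · exact hba hba'
        · exact hja hja'
      · right
        refine ⟨Or.inr ?_, hbu m hmlt⟩
        exact Sym2.eq_swap
  set D : V → ℝ := fun j => (if G.Adj b j then (X b - X j) else 0)
    - (if H.Adj b j then (X b - X j) else 0) with hD
  have hsum0 : ∑ j : V, D j = 0 := by
    rw [hD]
    rw [Finset.sum_sub_distrib]
    rw [hGb', sub_self]
  have hDz : ∀ j, j ≠ a → j ≠ u m → D j = 0 := by
    intro j hja hjm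
    have hiff : H.Adj b j ↔ G.Adj b j := by
      rw [hadjH]
      constructor
      · rintro (⟨h, -⟩ | h)
        · exact h
        · exact absurd h hjm
      · exact fun h => Or.inl ⟨h, hja⟩
    rw [hD]
    by_cases hGbj : G.Adj b j
    · simp only [if_pos hGbj, if_pos (hiff.mpr hGbj), sub_self]
    · simp only [if_neg hGbj, if_neg (fun h => hGbj (hiff.mp h)), sub_self]
  have ham : a ≠ u m := hau m hmlt
  have hpair : D a + D (u m) = 0 := by
    have hsub : ∑ j ∈ ({a, u m} : Finset V), D j = ∑ j : V, D j := by
      refine Finset.sum_subset (Finset.subset_univ _) fun x _ hx => ?_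
      simp only [Finset.mem_insert, Finset.mem_singleton, not_or] at hx
      exact hDz x hx.1 hx.2
    rw [Finset.sum_pair ham] at hsub
    rw [hsub, hsum0]
  have hDa : D a = X b - X a := by
    have hGba : G.Adj b a := hab.symm
    have hHba : ¬ H.Adj b a := by
      rw [hadjH]
      rintro (⟨-, h⟩ | h)
      · exact h rfl
      · exact ham h
    rw [hD]
    simp only [if_pos hGba, if_neg hHba, sub_zero]
  have hHbm : H.Adj b (u m) := (hadjH (u m)).mpr (Or.inr rfl)
  by_cases hGbm : G.Adj b (u m)
  · have hDm : D (u m) = 0 := by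
      rw [hD]
      simp only [if_pos hGbm, if_pos hHbm, sub_self]
    rw [hDa, hDm] at hpair
    linarith
  · have hDm : D (u m) = -(X b - X (u m)) := by
      rw [hD]
      simp only [if_neg hGbm, if_pos hHbm, zero_sub]
    rw [hDa, hDm] at hpair
    linarith
end
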